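/- arXiv:2401.09338 — 2 statements merged into one kernel-verified Lean document; each statement's English description precedes it below -/
import Mathlib

section
/- The integral ∫_{-1}^{1} (1/√(1 + x² z²) - 1) · (1/|z|) dz equals 2(log 2 - log(√(x² + 1) + 1)) for every real x. -/
open Real intervalIntegral

/-- Explicit evaluation of the logarithmic integral appearing in the computation of `G(t,x)`
for the arctan test case. -/
theorem integral_one_div_sqrt_sub_one
    (x : ℝ) :
    (∫ z in (-1:ℝ)..1, (1 / Real.sqrt (1 + x ^ 2 * z ^ 2) - 1) * (1 / |z|))
      = 2 * (Real.log 2 - Real.log (Real.sqrt (x ^ 2 + 1) + 1)) := by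
  have hu : ∀ z : ℝ, (1:ℝ) ≤ 1 + x ^ 2 * z ^ 2 := fun z => by nlinarith [sq_nonneg (x*z), sq_nonneg x, sq_nonneg z, sq_nonneg (x*z)]
  have hupos : ∀ z : ℝ, (0:ℝ) < 1 + x ^ 2 * z ^ 2 := fun z => lt_of_lt_of_le one_pos (hu z)
  have hs1 : ∀ z : ℝ, 1 ≤ Real.sqrt (1 + x ^ 2 * z ^ 2) := fun z => by
    nlinarith [Real.sq_sqrt (lt_of_lt_of_le one_pos (hu z)).le, Real.sqrt_nonneg (1 + x ^ 2 * z ^ 2)]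
  have hspos : ∀ z : ℝ, 0 < Real.sqrt (1 + x ^ 2 * z ^ 2) := fun z => lt_of_lt_of_le one_pos (hs1 z)
  have hsq : ∀ z : ℝ, Real.sqrt (1 + x ^ 2 * z ^ 2) ^ 2 = 1 + x ^ 2 * z ^ 2 :=
    fun z => Real.sq_sqrt (hupos z).le
  set h : ℝ → ℝ := fun z => -(x ^ 2 * |z|) / (Real.sqrt (1 + x ^ 2 * z ^ 2) * (1 + Real.sqrt (1 + x ^ 2 * z ^ 2))) with hh
  set f : ℝ → ℝ := fun z => -(x ^ 2 * z) / (Real.sqrt (1 + x ^ 2 * z ^ 2) * (1 + Real.sqrt (1 + x ^ 2 * z ^ 2))) with hf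
  have key : ∀ z : ℝ, (1 / Real.sqrt (1 + x ^ 2 * z ^ 2) - 1) * (1 / |z|) = h z := by
    intro z
    rcases eq_or_ne z 0 with rfl | hz
    · simp [hh]
    · have hs0 : Real.sqrt (1 + x ^ 2 * z ^ 2) ≠ 0 := (hspos z).ne'
      have h1s : (1:ℝ) + Real.sqrt (1 + x ^ 2 * z ^ 2) ≠ 0 := by positivity
      have habs : |z| ≠ 0 := abs_ne_zero.mpr hz
      simp only [hh]
      field_simp
      linear_combination (-1) * hsq z + x ^ 2 * sq_abs z
  have hcont_h : Continuous h := by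
    apply Continuous.div
    · fun_prop
    · fun_prop
    · intro z
      have := hspos z
      positivity
  have hcont_f : Continuous f := by
    apply Continuous.div
    · fun_prop
    · fun_prop
    · intro z
      have := hspos z
      positivity
  rw [intervalIntegral.integral_congr (g := h) (fun z _ => key z)]
  have hsplit : (∫ z in (-1:ℝ)..1, h z) = (∫ z in (-1:ℝ)..0, h z) + ∫ z in (0:ℝ)..1, h z := by
    rw [intervalIntegral.integral_add_adjacent_intervals
      (hcont_h.intervalIntegrable _ _) (hcont_h.intervalIntegrable _ _)]
  have heven : (∫ z in (-1:ℝ)..0, h z) = ∫ z in (0:ℝ)..1, h z := by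
    have heq := intervalIntegral.integral_comp_neg (a := 0) (b := 1) h
    simp only [neg_zero] at heq
    rw [← heq]
    apply intervalIntegral.integral_congr
    intro z _
    simp only [hh, abs_neg, neg_sq]
  have hfh : (∫ z in (0:ℝ)..1, h z) = ∫ z in (0:ℝ)..1, f z := by
    apply intervalIntegral.integral_congr
    intro z hz
    rw [Set.uIcc_of_le (by norm_num : (0:ℝ) ≤ 1)] at hz
    simp only [hh, hf, abs_of_nonneg hz.1]
  set F : ℝ → ℝ := fun z => -Real.log (1 + Real.sqrt (1 + x ^ 2 * z ^ 2)) with hF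
  have hftc : (∫ z in (0:ℝ)..1, f z) = F 1 - F 0 := by
    apply intervalIntegral.integral_eq_sub_of_hasDerivAt
    · intro z hz
      have hs0 : Real.sqrt (1 + x ^ 2 * z ^ 2) ≠ 0 := (hspos z).ne'
      have h1s : (1:ℝ) + Real.sqrt (1 + x ^ 2 * z ^ 2) ≠ 0 := by positivity
      have d1 : HasDerivAt (fun z : ℝ => 1 + x ^ 2 * z ^ 2) (x ^ 2 * (2 * z)) z := by
        have := ((hasDerivAt_pow 2 z).const_mul (x ^ 2)).const_add 1
        simpa using this
      have d2 : HasDerivAt (fun z : ℝ => Real.sqrt (1 + x ^ 2 * z ^ 2))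
          (1 / (2 * Real.sqrt (1 + x ^ 2 * z ^ 2)) * (x ^ 2 * (2 * z))) z :=
        (Real.hasDerivAt_sqrt (hupos z).ne').comp z d1
      have d3 : HasDerivAt (fun z : ℝ => 1 + Real.sqrt (1 + x ^ 2 * z ^ 2))
          (1 / (2 * Real.sqrt (1 + x ^ 2 * z ^ 2)) * (x ^ 2 * (2 * z))) z := d2.const_add 1
      have d4 := (Real.hasDerivAt_log h1s).comp z d3
      have d5 := d4.neg
      convert d5 using 1
      · rfl
      simp only [hf, Function.comp]
      field_simp
    · exact hcont_f.intervalIntegrable _ _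
  rw [hsplit, heven, hfh, hftc]
  simp only [hF]
  rw [show (1:ℝ) + x ^ 2 * 1 ^ 2 = x ^ 2 + 1 by ring, show (1:ℝ) + x ^ 2 * 0 ^ 2 = 1 by ring,
    Real.sqrt_one, add_comm (1:ℝ) (Real.sqrt (x ^ 2 + 1))]
  norm_num
  ring
end

section
/- Consider the function G(t,x) = -2x cos(x) + ∫_{-1}^{1} (sin(x + arctan(xz)) - sin(x) - arctan(xz) cos(x)) (1/|z|) dz. Then G(t,x) = -2x cos(x) + 2 sin(x)(log 2 - log(√(x²+1) + 1)) for every x ∈ ℝ. -/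
open Real

lemma abs_arctan_le_abs (y : ℝ) : |arctan y| ≤ |y| := by
  have mono := Real.arctan_strictMono.monotone
  have key : ∀ u : ℝ, 0 ≤ u → arctan u ≤ u := by
    intro u hu
    have h0 : 0 ≤ arctan u := by simpa using mono hu
    have h1 : arctan u ≤ tan (arctan u) :=
      Real.le_tan h0 (Real.arctan_lt_pi_div_two u)
    rwa [Real.tan_arctan] at h1
  rcases le_or_gt 0 y with hy | hy
  · have h0 : 0 ≤ arctan y := by simpa using mono hy
    rw [abs_of_nonneg h0, abs_of_nonneg hy]
    exact key y hy
  · have h0 : arctan y ≤ 0 := by simpa using mono hy.le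
    rw [abs_of_nonpos h0, abs_of_nonpos hy.le]
    have h2 := key (-y) (by linarith)
    rw [Real.arctan_neg] at h2
    linarith

/-- Closed form for the source term `G(t,x)` of the Kolmogorov equation in the arctan test
case. -/
theorem source_term_closed_form
    (G : ℝ → ℝ → ℝ)
    (hG : ∀ t x : ℝ, G t x = -2 * x * cos x +
      ∫ z in (-1:ℝ)..1,
        (sin (x + arctan (x * z)) - sin x - arctan (x * z) * cos x) * (1 / |z|)) :
    ∀ t x : ℝ,
      G t x = -2 * x * cos x
        + 2 * sin x * (Real.log 2 - Real.log (Real.sqrt (x ^ 2 + 1) + 1)) := by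
  intro t x
  rw [hG t x]
  -- abbreviations
  set s : ℝ → ℝ := fun z => Real.sqrt (1 + (x * z) ^ 2) with hs_def
  have hs_pos : ∀ z : ℝ, 0 < s z := fun z => Real.sqrt_pos.mpr (by positivity)
  have hs_one_le : ∀ z : ℝ, 1 ≤ s z := fun z =>
    Real.one_le_sqrt.mpr (by nlinarith [sq_nonneg (x*z)])
  have hsneg : ∀ z : ℝ, s (-z) = s z := by
    intro z
    rw [hs_def]
    simp only [mul_neg, neg_sq]
  have hs_sq : ∀ z : ℝ, s z ^ 2 = 1 + (x * z) ^ 2 := fun z =>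
    Real.sq_sqrt (by positivity)
  -- the even part (continuous form) and the odd part
  set ψ : ℝ → ℝ := fun z => -(x ^ 2 * |z|) / (s z * (1 + s z)) with hψ_def
  set h : ℝ → ℝ := fun z => cos x * ((x * z / s z - arctan (x * z)) * (1 / |z|))
    with hh_def
  -- pointwise decomposition of the integrand
  have hF : ∀ z : ℝ,
      (sin (x + arctan (x * z)) - sin x - arctan (x * z) * cos x) * (1 / |z|)
      = sin x * ψ z + h z := by
    intro z
    have hsin : sin (x + arctan (x * z)) =
        sin x * (1 / s z) + cos x * (x * z / s z) := by
      rw [Real.sin_add, Real.cos_arctan, Real.sin_arctan]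
    have hg : (1 / s z - 1) * (1 / |z|) = ψ z := by
      rcases eq_or_ne z 0 with rfl | hz
      · simp [hψ_def]
      · have hzab : (0:ℝ) < |z| := abs_pos.mpr hz
        have hzsq : |z| ^ 2 = z ^ 2 := sq_abs z
        have h1 : s z ≠ 0 := (hs_pos z).ne'
        have h2 : 1 + s z ≠ 0 := by positivity
        rw [hψ_def]
        field_simp
        linear_combination (-1) * hs_sq z + x^2 * hzsq
    rw [hsin, hh_def, ← hg]
    ring
  have hint_congr :
      (∫ z in (-1:ℝ)..1,
        (sin (x + arctan (x * z)) - sin x - arctan (x * z) * cos x) * (1 / |z|))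
      = ∫ z in (-1:ℝ)..1, (sin x * ψ z + h z) := by
    exact intervalIntegral.integral_congr (fun z _ => hF z)
  -- continuity of ψ
  have hψ_cont : Continuous ψ := by
    apply Continuous.div
    · fun_prop
    · fun_prop
    · intro z
      have := hs_pos z
      positivity
  -- integrability of h
  have hh_meas : Measurable h := by
    apply Measurable.mul measurable_const
    apply Measurable.mul
    · apply Measurable.sub
      · exact (Continuous.div (by fun_prop) (by fun_prop)
          (fun z => (hs_pos z).ne')).measurable
      · exact (Real.continuous_arctan.comp (continuous_const.mul continuous_id)).measurable
    · simp only [one_div]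
      exact (measurable_id.abs).inv
  have hh_bound : ∀ z : ℝ, ‖h z‖ ≤ ‖(2 * |x| * |cos x| : ℝ)‖ := by
    intro z
    rcases eq_or_ne z 0 with rfl | hz
    · simp [hh_def]
      positivity
    · have hzab : (0:ℝ) < |z| := abs_pos.mpr hz
      have h1 : |x * z / s z| ≤ |x * z| := by
        rw [abs_div, abs_of_pos (hs_pos z)]
        calc |x * z| / s z ≤ |x * z| / 1 :=
              div_le_div_of_nonneg_left (abs_nonneg _) one_pos (hs_one_le z)
          _ = |x * z| := by ring
      have h2 : |arctan (x * z)| ≤ |x * z| := abs_arctan_le_abs _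
      have h3 : |x * z / s z - arctan (x * z)| ≤ 2 * |x * z| := by
        calc |x * z / s z - arctan (x * z)|
            ≤ |x * z / s z| + |arctan (x * z)| := abs_sub _ _
          _ ≤ 2 * |x * z| := by linarith
      have : ‖h z‖ = |cos x| * (|x * z / s z - arctan (x * z)| / |z|) := by
        rw [hh_def]
        simp only [Real.norm_eq_abs, abs_mul, abs_div, abs_abs, one_div, abs_inv]
        ring
      rw [this, Real.norm_eq_abs]
      rw [abs_of_nonneg (by positivity : (0:ℝ) ≤ 2 * |x| * |cos x|)]
      have h4 : |x * z / s z - arctan (x * z)| / |z| ≤ 2 * |x| := by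
        rw [div_le_iff₀ hzab]
        calc |x * z / s z - arctan (x * z)| ≤ 2 * |x * z| := h3
          _ = 2 * |x| * |z| := by rw [abs_mul]; ring
      calc |cos x| * (|x * z / s z - arctan (x * z)| / |z|)
          ≤ |cos x| * (2 * |x|) := by
            apply mul_le_mul_of_nonneg_left h4 (abs_nonneg _)
        _ = 2 * |x| * |cos x| := by ring
  have hh_int : IntervalIntegrable h MeasureTheory.volume (-1) 1 := by
    apply IntervalIntegrable.mono_fun (intervalIntegrable_const
      (c := (2 * |x| * |cos x| : ℝ)))
    · exact hh_meas.aestronglyMeasurable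
    · exact Filter.Eventually.of_forall (fun z => hh_bound z)
  have hψ_int : IntervalIntegrable ψ MeasureTheory.volume (-1) 1 :=
    hψ_cont.intervalIntegrable _ _
  -- split the integral
  have hsplit :
      (∫ z in (-1:ℝ)..1, (sin x * ψ z + h z))
      = sin x * (∫ z in (-1:ℝ)..1, ψ z) + ∫ z in (-1:ℝ)..1, h z := by
    rw [intervalIntegral.integral_add (hψ_int.const_mul _) hh_int,
      intervalIntegral.integral_const_mul]
  -- odd part vanishes
  have hh_odd : ∀ z : ℝ, h (-z) = -h z := by
    intro z
    simp only [hh_def, hsneg z, mul_neg, Real.arctan_neg, abs_neg, neg_div]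
    ring
  have hh_zero : (∫ z in (-1:ℝ)..1, h z) = 0 := by
    have h1 : (∫ z in (-1:ℝ)..1, h (-z)) = ∫ z in (-1:ℝ)..1, h z := by
      rw [intervalIntegral.integral_comp_neg h]
      norm_num
    have h2 : (∫ z in (-1:ℝ)..1, h (-z)) = -∫ z in (-1:ℝ)..1, h z := by
      simp_rw [hh_odd]
      exact intervalIntegral.integral_neg
    linarith [h1.symm.trans h2]
  -- evaluate ∫ ψ
  have hψ_even : ∀ z : ℝ, ψ (-z) = ψ z := by
    intro z
    simp only [hψ_def, hsneg z, abs_neg]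
  have hψ_half : (∫ z in (-1:ℝ)..0, ψ z) = ∫ z in (0:ℝ)..1, ψ z := by
    have h1 : (∫ z in (0:ℝ)..1, ψ (-z)) = ∫ z in (-1:ℝ)..(-(0:ℝ)), ψ z :=
      intervalIntegral.integral_comp_neg ψ
    rw [neg_zero] at h1
    simp_rw [hψ_even] at h1
    exact h1.symm
  -- FTC on [0,1]
  set H : ℝ → ℝ := fun z => -Real.log (1 + s z) with hH_def
  have hderiv : ∀ z : ℝ, HasDerivAt H (-(x ^ 2 * z) / (s z * (1 + s z))) z := by
    intro z
    have h1 : HasDerivAt (fun z : ℝ => 1 + (x * z) ^ 2) (2 * (x * z) * x) z := by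
      have : HasDerivAt (fun z : ℝ => x * z) x z := by
        simpa using (hasDerivAt_id z).const_mul x
      simpa using (this.pow 2).const_add 1
    have h2 : HasDerivAt (fun z => s z) (2 * (x * z) * x / (2 * s z)) z :=
      h1.sqrt (by positivity)
    have h3 : HasDerivAt (fun z => 1 + s z) (2 * (x * z) * x / (2 * s z)) z :=
      h2.const_add 1
    have h4 : HasDerivAt (fun z => Real.log (1 + s z))
        ((2 * (x * z) * x / (2 * s z)) / (1 + s z)) z := by
      apply h3.log
      have := hs_pos z
      positivity
    have h5 : HasDerivAt H (-((2 * (x * z) * x / (2 * s z)) / (1 + s z))) z := h4.neg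
    convert h5 using 1
    have hsz := (hs_pos z).ne'
    have h1sz : (1 + s z) ≠ 0 := by have := hs_pos z; positivity
    rw [div_div, neg_div]
    congr 1
    rw [div_eq_div_iff (mul_ne_zero hsz h1sz) (mul_ne_zero (mul_ne_zero two_ne_zero hsz) h1sz)]
    ring
  have hψ'_cont : Continuous (fun z : ℝ => -(x ^ 2 * z) / (s z * (1 + s z))) := by
    apply Continuous.div
    · fun_prop
    · fun_prop
    · intro z
      have := hs_pos z
      positivity
  have hFTC : (∫ z in (0:ℝ)..1, -(x ^ 2 * z) / (s z * (1 + s z))) = H 1 - H 0 :=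
    intervalIntegral.integral_eq_sub_of_hasDerivAt (fun z _ => hderiv z)
      (hψ'_cont.intervalIntegrable _ _)
  have hψ_eq_on : Set.EqOn ψ (fun z : ℝ => -(x ^ 2 * z) / (s z * (1 + s z)))
      (Set.uIcc (0:ℝ) 1) := by
    intro z hz
    rw [Set.uIcc_of_le (by norm_num : (0:ℝ) ≤ 1)] at hz
    rw [hψ_def]
    simp only
    rw [abs_of_nonneg hz.1]
  have hψ01 : (∫ z in (0:ℝ)..1, ψ z) = H 1 - H 0 := by
    rw [intervalIntegral.integral_congr hψ_eq_on, hFTC]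
  have hH0 : H 0 = -Real.log 2 := by
    rw [hH_def]
    simp [hs_def]
    norm_num
  have hH1 : H 1 = -Real.log (Real.sqrt (x ^ 2 + 1) + 1) := by
    rw [hH_def]
    simp only
    rw [hs_def]
    simp only
    rw [show (1 + (x * 1) ^ 2 : ℝ) = x ^ 2 + 1 by ring,
      add_comm 1 (Real.sqrt (x ^ 2 + 1))]
  have hψ_total : (∫ z in (-1:ℝ)..1, ψ z)
      = 2 * (Real.log 2 - Real.log (Real.sqrt (x ^ 2 + 1) + 1)) := by
    have hadd : (∫ z in (-1:ℝ)..0, ψ z) + (∫ z in (0:ℝ)..1, ψ z)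
        = ∫ z in (-1:ℝ)..1, ψ z :=
      intervalIntegral.integral_add_adjacent_intervals
        (hψ_cont.intervalIntegrable _ _) (hψ_cont.intervalIntegrable _ _)
    rw [← hadd, hψ_half, hψ01, hH0, hH1]
    ring
  rw [hint_congr, hsplit, hh_zero, hψ_total]
  ring
end
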